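/- For a block matrix M = [[0, I], [−A, 0]] ∈ ℂ^{2n×2n} with A ∈ ℂ^{n×n}, and vectors b, z ∈ ℂ^n, the top half of exp(tM)·[b; z] equals cos(tR)b + t·sinc(tR)z, where R is any square root of A (interpreting cos(tR) and sinc(tR) as the power series in A of the previous statement). -/

import Mathlib

/-- Matrix cosine, defined by its power series. -/
noncomputable def mcos {ι : Type} [Fintype ι] [DecidableEq ι]
    (X : Matrix ι ι ℂ) : Matrix ι ι ℂ :=
  ∑' k : ℕ, (((-1 : ℂ) ^ k / (Nat.factorial (2 * k)) : ℂ)) • X ^ (2 * k)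

/-- Matrix sine, defined by its power series. -/
noncomputable def msin {ι : Type} [Fintype ι] [DecidableEq ι]
    (X : Matrix ι ι ℂ) : Matrix ι ι ℂ :=
  ∑' k : ℕ, (((-1 : ℂ) ^ k / (Nat.factorial (2 * k + 1)) : ℂ)) • X ^ (2 * k + 1)

/-- Matrix sinc, defined by its power series. -/
noncomputable def msinc {ι : Type} [Fintype ι] [DecidableEq ι]
    (X : Matrix ι ι ℂ) : Matrix ι ι ℂ :=
  ∑' k : ℕ, (((-1 : ℂ) ^ k / (Nat.factorial (2 * k + 1)) : ℂ)) • X ^ (2 * k)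

/-- Matrix hyperbolic cosine, defined by its power series. -/
noncomputable def mcosh {ι : Type} [Fintype ι] [DecidableEq ι]
    (X : Matrix ι ι ℂ) : Matrix ι ι ℂ :=
  ∑' k : ℕ, ((1 / (Nat.factorial (2 * k)) : ℂ)) • X ^ (2 * k)

/-- Matrix hyperbolic sine, defined by its power series. -/
noncomputable def msinh {ι : Type} [Fintype ι] [DecidableEq ι]
    (X : Matrix ι ι ℂ) : Matrix ι ι ℂ :=
  ∑' k : ℕ, ((1 / (Nat.factorial (2 * k + 1)) : ℂ)) • X ^ (2 * k + 1)

/-- Matrix hyperbolic sinc, defined by its power series. -/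
noncomputable def msinch {ι : Type} [Fintype ι] [DecidableEq ι]
    (X : Matrix ι ι ℂ) : Matrix ι ι ℂ :=
  ∑' k : ℕ, ((1 / (Nat.factorial (2 * k + 1)) : ℂ)) • X ^ (2 * k)

/-- Matrix exponential, defined by its power series. -/
noncomputable def mexp {ι : Type} [Fintype ι] [DecidableEq ι]
    (X : Matrix ι ι ℂ) : Matrix ι ι ℂ :=
  ∑' k : ℕ, ((1 / (Nat.factorial k) : ℂ)) • X ^ k

/-- `cos(t√A)` expressed as a power series in `A` (independent of the square root). -/
noncomputable def cosOfSq {ι : Type} [Fintype ι] [DecidableEq ι]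
    (A : Matrix ι ι ℂ) (t : ℂ) : Matrix ι ι ℂ :=
  ∑' k : ℕ, (((-1 : ℂ) ^ k * t ^ (2 * k) / (Nat.factorial (2 * k)) : ℂ)) • A ^ k

/-- `sinc(t√A)` expressed as a power series in `A` (independent of the square root). -/
noncomputable def sincOfSq {ι : Type} [Fintype ι] [DecidableEq ι]
    (A : Matrix ι ι ℂ) (t : ℂ) : Matrix ι ι ℂ :=
  ∑' k : ℕ, (((-1 : ℂ) ^ k * t ^ (2 * k) / (Nat.factorial (2 * k + 1)) : ℂ)) • A ^ k

/-- Entries of matrix powers are bounded geometrically. -/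
lemma pow_entry_bound {ι : Type} [Fintype ι] [DecidableEq ι] (X : Matrix ι ι ℂ) :
    ∃ C : ℝ, 0 ≤ C ∧ ∀ (k : ℕ) (p q : ι), ‖(X ^ k) p q‖ ≤ C ^ k := by
  refine ⟨1 + ∑ p, ∑ q, ‖X p q‖, by positivity, ?_⟩
  set C : ℝ := 1 + ∑ p, ∑ q, ‖X p q‖ with hCdef
  have hrow : ∀ p : ι, ∑ q, ‖X p q‖ ≤ C := by
    intro p
    have h1 : ∑ q, ‖X p q‖ ≤ ∑ p', ∑ q, ‖X p' q‖ :=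
      Finset.single_le_sum (f := fun p' => ∑ q, ‖X p' q‖)
        (fun p' _ => Finset.sum_nonneg fun q _ => norm_nonneg _) (Finset.mem_univ p)
    linarith
  intro k
  induction k with
  | zero =>
    intro p q
    simp only [pow_zero, Matrix.one_apply]
    split <;> simp
  | succ k ih =>
    intro p q
    rw [pow_succ']
    calc ‖(X * X ^ k) p q‖ = ‖∑ r, X p r * (X ^ k) r q‖ := by rw [Matrix.mul_apply]
      _ ≤ ∑ r, ‖X p r * (X ^ k) r q‖ := norm_sum_le _ _
      _ = ∑ r, ‖X p r‖ * ‖(X ^ k) r q‖ := by simp [norm_mul]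
      _ ≤ ∑ r, ‖X p r‖ * C ^ k := by
          refine Finset.sum_le_sum fun r _ => ?_
          exact mul_le_mul_of_nonneg_left (ih r q) (norm_nonneg _)
      _ = (∑ r, ‖X p r‖) * C ^ k := by rw [Finset.sum_mul]
      _ ≤ C * C ^ k := mul_le_mul_of_nonneg_right (hrow p) (by positivity)
      _ = C ^ (k + 1) := (pow_succ' C k).symm

lemma summable_exp_entry {ι : Type} [Fintype ι] [DecidableEq ι] (X : Matrix ι ι ℂ) (p q : ι) :
    Summable fun k : ℕ => (1 / (Nat.factorial k) : ℂ) * (X ^ k) p q := by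
  obtain ⟨C, hC0, hC⟩ := pow_entry_bound X
  refine Summable.of_norm_bounded (Real.summable_pow_div_factorial C) ?_
  intro k
  rw [norm_mul]
  calc ‖(1 / (Nat.factorial k) : ℂ)‖ * ‖(X ^ k) p q‖
      ≤ (1 / (Nat.factorial k)) * C ^ k := by
        refine mul_le_mul ?_ (hC k p q) (norm_nonneg _) (by positivity)
        simp
    _ = C ^ k / Nat.factorial k := by ring

lemma summable_sq_entry {ι : Type} [Fintype ι] [DecidableEq ι] (X : Matrix ι ι ℂ) (t : ℂ)
    (c : ℕ → ℕ) (hc : ∀ m, Nat.factorial m ≤ Nat.factorial (c m)) (p q : ι) :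
    Summable fun m : ℕ =>
      ((-1 : ℂ) ^ m * t ^ (2 * m) / (Nat.factorial (c m)) : ℂ) * (X ^ m) p q := by
  obtain ⟨C, hC0, hC⟩ := pow_entry_bound X
  refine Summable.of_norm_bounded (Real.summable_pow_div_factorial (‖t‖ ^ 2 * C)) ?_
  intro m
  have hfac : (0:ℝ) < Nat.factorial m := by positivity
  rw [norm_mul]
  calc ‖((-1 : ℂ) ^ m * t ^ (2 * m) / (Nat.factorial (c m)) : ℂ)‖ * ‖(X ^ m) p q‖
      = ‖t‖ ^ (2 * m) / (Nat.factorial (c m)) * ‖(X ^ m) p q‖ := by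
        simp [norm_div, norm_mul, norm_pow]
    _ ≤ ‖t‖ ^ (2 * m) / (Nat.factorial (c m)) * C ^ m :=
        mul_le_mul_of_nonneg_left (hC m p q) (by positivity)
    _ ≤ ‖t‖ ^ (2 * m) / (Nat.factorial m) * C ^ m := by
        refine mul_le_mul_of_nonneg_right ?_ (by positivity)
        apply div_le_div_of_nonneg_left (by positivity) hfac
        exact_mod_cast hc m
    _ = (‖t‖ ^ 2 * C) ^ m / Nat.factorial m := by
        rw [mul_pow, pow_mul]; ring

theorem stmt15 {n : ℕ} (A : Matrix (Fin n) (Fin n) ℂ) (t : ℂ) (b z : Fin n → ℂ) :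
    ∀ i : Fin n,
      (mexp (t • Matrix.fromBlocks 0 1 (-A) 0)).mulVec (Sum.elim b z) (Sum.inl i) =
        ((cosOfSq A t).mulVec b + t • (sincOfSq A t).mulVec z) i := by
  intro i
  set v : Fin n ⊕ Fin n → ℂ := Sum.elim b z with hv
  set M : Matrix (Fin n ⊕ Fin n) (Fin n ⊕ Fin n) ℂ := Matrix.fromBlocks 0 1 (-A) 0 with hM
  set X : Matrix (Fin n ⊕ Fin n) (Fin n ⊕ Fin n) ℂ := t • M with hX
  have hM2 : M ^ 2 = Matrix.fromBlocks (-A) 0 0 (-A) := by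
    rw [pow_two, hM, Matrix.fromBlocks_multiply]
    simp
  have hMeven : ∀ m : ℕ, M ^ (2*m) = Matrix.fromBlocks ((-A)^m) 0 0 ((-A)^m) := by
    intro m
    induction m with
    | zero => simp [Matrix.fromBlocks_one]
    | succ m ih =>
      have h2 : 2*(m+1) = 2*m + 2 := by ring
      rw [h2, pow_add, ih, hM2, Matrix.fromBlocks_multiply]
      simp [pow_succ]
  have hModd : ∀ m : ℕ, M ^ (2*m+1) = Matrix.fromBlocks 0 ((-A)^m) ((-A)^m * (-A)) 0 := by
    intro m
    rw [pow_succ, hMeven m, hM, Matrix.fromBlocks_multiply]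
    simp
  have hnegpow : ∀ m : ℕ, (-A) ^ m = ((-1:ℂ)^m) • A ^ m := by
    intro m; rw [← neg_one_smul ℂ A, smul_pow]
  have hXpow : ∀ k : ℕ, X ^ k = t ^ k • M ^ k := fun k => smul_pow t M k
  have hsumf : Summable (fun k : ℕ => ((1/(Nat.factorial k) : ℂ)) • X ^ k) := by
    apply Pi.summable.mpr; intro p; apply Pi.summable.mpr; intro q
    simpa [Matrix.smul_apply] using summable_exp_entry X p q
  have hmexp : ∀ l, mexp X (Sum.inl i) l
      = ∑' k : ℕ, (1/(Nat.factorial k):ℂ) * (X ^ k) (Sum.inl i) l := by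
    intro l
    rw [mexp]; erw [tsum_apply hsumf, tsum_apply (Pi.summable.mp hsumf _)]
    exact tsum_congr fun k => by simp [Matrix.smul_apply]
  set c : ℕ → (Fin n ⊕ Fin n) → ℂ :=
    fun k l => (1/(Nat.factorial k):ℂ) * (X ^ k) (Sum.inl i) l * v l with hc
  have hcl : ∀ l, Summable fun k => c k l := fun l =>
    (summable_exp_entry X _ l).mul_right (v l)
  have hg : Summable (fun k => ∑ l, c k l) := summable_sum fun l _ => hcl l
  have hinj2 : Function.Injective (fun m : ℕ => 2*m) := by
    intro a b h; simp only at h; omega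
  have hinj2' : Function.Injective (fun m : ℕ => 2*m+1) := by
    intro a b h; simp only at h; omega
  have hLHS : (mexp X).mulVec v (Sum.inl i) = ∑' k : ℕ, ∑ l, c k l := by
    simp only [Matrix.mulVec, dotProduct]
    calc ∑ l, mexp X (Sum.inl i) l * v l
        = ∑ l, ∑' k, c k l := by
          refine Finset.sum_congr rfl fun l _ => ?_
          rw [hmexp l, ← tsum_mul_right]
      _ = ∑' k, ∑ l, c k l := (Summable.tsum_finsetSum fun l _ => hcl l).symm
  have he : Summable (fun m : ℕ => ∑ l, c (2*m) l) := by
    exact hg.comp_injective hinj2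
  have ho : Summable (fun m : ℕ => ∑ l, c (2*m+1) l) := by
    exact hg.comp_injective hinj2'
  have hsplit : ∑' k : ℕ, ∑ l, c k l
      = (∑' m : ℕ, ∑ l, c (2*m) l) + ∑' m : ℕ, ∑ l, c (2*m+1) l :=
    (tsum_even_add_odd (f := fun k => ∑ l, c k l) he ho).symm
  -- cosine part
  have hcos_ent := summable_sq_entry A t (fun m => 2*m)
    (fun m => Nat.factorial_le (by show m ≤ 2*m; omega))
  have hcosS : Summable (fun m : ℕ =>
      (((-1 : ℂ) ^ m * t ^ (2 * m) / (Nat.factorial (2 * m)) : ℂ)) • A ^ m) := by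
    apply Pi.summable.mpr; intro p; apply Pi.summable.mpr; intro q
    simpa [Matrix.smul_apply] using hcos_ent p q
  have hcos_entry : ∀ j, cosOfSq A t i j
      = ∑' m : ℕ, ((-1:ℂ)^m * t^(2*m) / (Nat.factorial (2*m))) * (A^m) i j := by
    intro j
    rw [cosOfSq]; erw [tsum_apply hcosS, tsum_apply (Pi.summable.mp hcosS _)]
    exact tsum_congr fun m => by simp [Matrix.smul_apply]
  have hEvenEq : (∑' m : ℕ, ∑ l, c (2*m) l) = (cosOfSq A t).mulVec b i := by
    have hrhs : (cosOfSq A t).mulVec b i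
        = ∑' m : ℕ, ∑ j, ((-1:ℂ)^m * t^(2*m) / (Nat.factorial (2*m))) * (A^m) i j * b j := by
      simp only [Matrix.mulVec, dotProduct]
      calc ∑ j, cosOfSq A t i j * b j
          = ∑ j, ∑' m, ((-1:ℂ)^m * t^(2*m) / (Nat.factorial (2*m))) * (A^m) i j * b j := by
            refine Finset.sum_congr rfl fun j _ => ?_
            rw [hcos_entry j, ← tsum_mul_right]
        _ = _ := (Summable.tsum_finsetSum fun j _ => (hcos_ent i j).mul_right (b j)).symm
    rw [hrhs]
    refine tsum_congr fun m => ?_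
    rw [Fintype.sum_sum_type]
    have hz0 : ∀ j, c (2*m) (Sum.inr j) = 0 := by
      intro j
      simp [hc, hXpow, hMeven, Matrix.smul_apply]
    simp only [hz0, Finset.sum_const_zero, add_zero]
    refine Finset.sum_congr rfl fun j _ => ?_
    simp only [hc, hXpow, hMeven, hnegpow, hv, Matrix.smul_apply,
      Matrix.fromBlocks_apply₁₁, Sum.elim_inl, smul_eq_mul]
    ring
  -- sinc part
  have hsinc_ent := summable_sq_entry A t (fun m => 2*m+1)
    (fun m => Nat.factorial_le (by show m ≤ 2*m+1; omega))
  have hsincS : Summable (fun m : ℕ =>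
      (((-1 : ℂ) ^ m * t ^ (2 * m) / (Nat.factorial (2 * m + 1)) : ℂ)) • A ^ m) := by
    apply Pi.summable.mpr; intro p; apply Pi.summable.mpr; intro q
    simpa [Matrix.smul_apply] using hsinc_ent p q
  have hsinc_entry : ∀ j, sincOfSq A t i j
      = ∑' m : ℕ, ((-1:ℂ)^m * t^(2*m) / (Nat.factorial (2*m+1))) * (A^m) i j := by
    intro j
    rw [sincOfSq]; erw [tsum_apply hsincS, tsum_apply (Pi.summable.mp hsincS _)]
    exact tsum_congr fun m => by simp [Matrix.smul_apply]
  have hOddEq : (∑' m : ℕ, ∑ l, c (2*m+1) l) = t * (sincOfSq A t).mulVec z i := by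
    have hrhs : (sincOfSq A t).mulVec z i
        = ∑' m : ℕ, ∑ j, ((-1:ℂ)^m * t^(2*m) / (Nat.factorial (2*m+1))) * (A^m) i j * z j := by
      simp only [Matrix.mulVec, dotProduct]
      calc ∑ j, sincOfSq A t i j * z j
          = ∑ j, ∑' m, ((-1:ℂ)^m * t^(2*m) / (Nat.factorial (2*m+1))) * (A^m) i j * z j := by
            refine Finset.sum_congr rfl fun j _ => ?_
            rw [hsinc_entry j, ← tsum_mul_right]
        _ = _ := (Summable.tsum_finsetSum fun j _ => (hsinc_ent i j).mul_right (z j)).symm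
    rw [hrhs, ← tsum_mul_left]
    refine tsum_congr fun m => ?_
    rw [Finset.mul_sum, Fintype.sum_sum_type]
    have hz0 : ∀ j, c (2*m+1) (Sum.inl j) = 0 := by
      intro j
      simp [hc, hXpow, hModd, Matrix.smul_apply]
    simp only [hz0, Finset.sum_const_zero, zero_add]
    refine Finset.sum_congr rfl fun j _ => ?_
    simp only [hc, hXpow, hModd, hnegpow, hv, Matrix.smul_apply,
      Matrix.fromBlocks_apply₁₂, Sum.elim_inr, smul_eq_mul]
    ring
  rw [hLHS, hsplit, hEvenEq, hOddEq]
  simp [Pi.add_apply, Pi.smul_apply, smul_eq_mul]
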